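/- Fix matrices ∇h ∈ ℝ^{n×m}, ∇g ∈ ℝ^{n×p} such that the columns of [∇h, ∇g] are linearly independent, a diagonal matrix H ∈ ℝ^{m×m}, a vector g ∈ ℝ^p, a matrix M ∈ ℝ^{n'×n} and a vector c ∈ ℝ^n; set F(θ) := Mᵀθ + c for θ ∈ ℝ^{n'}, and define the loss l(θ) := inf{ ‖F(θ) + ∇h λ + ∇g ν‖₂² + ‖Hλ‖₂² + ‖g‖₂² : λ ∈ ℝ^m with λ ≥ 0 componentwise, ν ∈ ℝ^p }. With R := I − ∇g(∇gᵀ∇g)⁻¹∇gᵀ, P := ∇hᵀR∇h + H², and Q := R − R∇h P⁻¹ ∇hᵀ R, one has for every θ ∈ ℝ^{n'}: l(θ) = inf{ (λ + P⁻¹∇hᵀR F(θ))ᵀ P (λ + P⁻¹∇hᵀR F(θ)) : λ ∈ ℝ^m, λ ≥ 0 componentwise } + F(θ)ᵀ Q F(θ) + ‖g‖₂². -/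
import Mathlib


open Matrix

/-- The Euclidean (ℓ²) norm of a vector in `Fin n → ℝ`. -/
noncomputable def euclNorm {n : ℕ} (v : Fin n → ℝ) : ℝ :=
  ‖(EuclideanSpace.equiv (Fin n) ℝ).symm v‖

lemma euclNorm_sq {n : ℕ} (v : Fin n → ℝ) : euclNorm v ^ 2 = v ⬝ᵥ v := by
  rw [euclNorm, EuclideanSpace.norm_eq, Real.sq_sqrt (Finset.sum_nonneg fun i _ => sq_nonneg _)]
  simp [dotProduct, sq, Real.norm_eq_abs, abs_mul_abs_self]

lemma dp_mv {n m : ℕ} (A : Matrix (Fin n) (Fin m) ℝ) (x : Fin n → ℝ) (y : Fin m → ℝ) :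
    x ⬝ᵥ (A *ᵥ y) = (Aᵀ *ᵥ x) ⬝ᵥ y := by
  rw [Matrix.dotProduct_mulVec, Matrix.mulVec_transpose]

lemma dp_self_nonneg {n : ℕ} (v : Fin n → ℝ) : 0 ≤ v ⬝ᵥ v :=
  Finset.sum_nonneg fun i _ => mul_self_nonneg _

lemma sInf_shift (S1 S2 : Set ℝ) (C : ℝ) (ne1 : S1.Nonempty) (ne2 : S2.Nonempty)
    (bdd1 : BddBelow S1) (bdd2 : BddBelow S2)
    (h1 : ∀ t ∈ S1, ∃ u ∈ S2, u + C ≤ t) (h2 : ∀ u ∈ S2, u + C ∈ S1) :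
    sInf S1 = sInf S2 + C := by
  apply le_antisymm
  · have key : ∀ u ∈ S2, sInf S1 ≤ u + C := fun u hu => csInf_le bdd1 (h2 u hu)
    have : sInf S1 - C ≤ sInf S2 := le_csInf ne2 (fun u hu => by linarith [key u hu])
    linarith
  · apply le_csInf ne1
    intro t ht
    obtain ⟨u, hu, hle⟩ := h1 t ht
    have := csInf_le bdd2 hu
    linarith

theorem stmt13 {n m p n' : ℕ} (gradh : Matrix (Fin n) (Fin m) ℝ)
    (gradg : Matrix (Fin n) (Fin p) ℝ)
    (H : Matrix (Fin m) (Fin m) ℝ) (hH : H.IsDiag)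
    (hli : ∀ (w₁ : Fin m → ℝ) (w₂ : Fin p → ℝ),
      gradh *ᵥ w₁ + gradg *ᵥ w₂ = 0 → w₁ = 0 ∧ w₂ = 0)
    (g : Fin p → ℝ) (M : Matrix (Fin n') (Fin n) ℝ) (c : Fin n → ℝ)
    (R : Matrix (Fin n) (Fin n) ℝ)
    (hR : R = 1 - gradg * (gradgᵀ * gradg)⁻¹ * gradgᵀ)
    (P : Matrix (Fin m) (Fin m) ℝ)
    (hP : P = gradhᵀ * R * gradh + H * H)
    (Q : Matrix (Fin n) (Fin n) ℝ)
    (hQ : Q = R - R * gradh * P⁻¹ * gradhᵀ * R) :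
    ∀ θ : Fin n' → ℝ,
      sInf {t : ℝ | ∃ (lam : Fin m → ℝ) (ν : Fin p → ℝ), (∀ i, 0 ≤ lam i) ∧
          t = euclNorm ((Mᵀ *ᵥ θ + c) + gradh *ᵥ lam + gradg *ᵥ ν) ^ 2
              + euclNorm (H *ᵥ lam) ^ 2 + euclNorm g ^ 2} =
        sInf {t : ℝ | ∃ lam : Fin m → ℝ, (∀ i, 0 ≤ lam i) ∧
            t = (lam + P⁻¹ *ᵥ (gradhᵀ *ᵥ (R *ᵥ (Mᵀ *ᵥ θ + c)))) ⬝ᵥ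
                P *ᵥ (lam + P⁻¹ *ᵥ (gradhᵀ *ᵥ (R *ᵥ (Mᵀ *ᵥ θ + c))))}
          + (Mᵀ *ᵥ θ + c) ⬝ᵥ Q *ᵥ (Mᵀ *ᵥ θ + c) + euclNorm g ^ 2 := by
  -- Basic matrix facts
  set G : Matrix (Fin p) (Fin p) ℝ := gradgᵀ * gradg with hGdef
  clear_value G
  have hginj : ∀ x : Fin p → ℝ, gradg *ᵥ x = 0 → x = 0 := by
    intro x hx
    exact (hli 0 x (by simpa using hx)).2
  have hGdet : IsUnit G.det := by
    rw [isUnit_iff_ne_zero]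
    intro hdet
    obtain ⟨v, hv0, hv⟩ := (Matrix.exists_mulVec_eq_zero_iff).2 hdet
    refine hv0 (hginj v ?_)
    refine (dotProduct_self_eq_zero).1 ?_
    rw [dp_mv, Matrix.mulVec_mulVec, ← hGdef, hv]
    simp
  have hGsymm : Gᵀ = G := by rw [hGdef, Matrix.transpose_mul, Matrix.transpose_transpose]
  have hGinvsymm : (G⁻¹)ᵀ = G⁻¹ := by rw [Matrix.transpose_nonsing_inv, hGsymm]
  have hGG : G * G⁻¹ = 1 := Matrix.mul_nonsing_inv _ hGdet
  have hgR : gradgᵀ * R = 0 := by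
    rw [hR, Matrix.mul_sub, Matrix.mul_one, ← Matrix.mul_assoc, ← Matrix.mul_assoc, ← hGdef,
      hGG, Matrix.one_mul, sub_self]
  have hRsymm : Rᵀ = R := by
    rw [hR, Matrix.transpose_sub, Matrix.transpose_one, Matrix.transpose_mul,
      Matrix.transpose_mul, Matrix.transpose_transpose, hGinvsymm, Matrix.mul_assoc]
  have hRg : R * gradg = 0 := by
    have := congrArg Matrix.transpose hgR
    rwa [Matrix.transpose_mul, Matrix.transpose_transpose, hRsymm, Matrix.transpose_zero] at this
  have hRR : R * R = R := by
    nth_rewrite 2 [hR]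
    rw [Matrix.mul_sub, Matrix.mul_one, ← Matrix.mul_assoc, ← Matrix.mul_assoc, hRg,
      Matrix.zero_mul, Matrix.zero_mul, sub_zero]
  have hHsymm : Hᵀ = H := hH.isSymm
  have hPsymm : Pᵀ = P := by
    rw [hP, Matrix.transpose_add, Matrix.transpose_mul, Matrix.transpose_mul,
      Matrix.transpose_mul, Matrix.transpose_transpose, hRsymm, hHsymm, Matrix.mul_assoc,
      ← Matrix.mul_assoc gradhᵀ R gradh]
  -- R is idempotent on quadratic forms
  have hRidem : ∀ y : Fin n → ℝ, y ⬝ᵥ (R *ᵥ y) = (R *ᵥ y) ⬝ᵥ (R *ᵥ y) := by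
    intro y
    nth_rewrite 1 [← hRR]
    rw [← Matrix.mulVec_mulVec, dp_mv, hRsymm]
  -- quadratic form of P
  have hPquad : ∀ x : Fin m → ℝ,
      x ⬝ᵥ (P *ᵥ x) = (gradh *ᵥ x) ⬝ᵥ (R *ᵥ (gradh *ᵥ x)) + (H *ᵥ x) ⬝ᵥ (H *ᵥ x) := by
    intro x
    rw [hP, Matrix.add_mulVec, dotProduct_add]
    congr 1
    · rw [← Matrix.mulVec_mulVec, ← Matrix.mulVec_mulVec, dp_mv, Matrix.transpose_transpose]
    · rw [← Matrix.mulVec_mulVec, dp_mv, hHsymm]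
  have hPpsd : ∀ x : Fin m → ℝ, 0 ≤ x ⬝ᵥ (P *ᵥ x) := by
    intro x
    rw [hPquad, hRidem]
    exact add_nonneg (dp_self_nonneg _) (dp_self_nonneg _)
  have hPker : ∀ x : Fin m → ℝ, P *ᵥ x = 0 → x = 0 := by
    intro x hx
    have h0 : x ⬝ᵥ (P *ᵥ x) = 0 := by rw [hx]; simp
    rw [hPquad, hRidem] at h0
    have h1 : R *ᵥ (gradh *ᵥ x) = 0 := by
      refine (dotProduct_self_eq_zero).1 ?_
      nlinarith [dp_self_nonneg (R *ᵥ (gradh *ᵥ x)), dp_self_nonneg (H *ᵥ x)]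
    -- gradh x = gradg ((G⁻¹ * gradgᵀ) *ᵥ (gradh x))
    have h2 : gradh *ᵥ x + gradg *ᵥ (-(((G⁻¹ * gradgᵀ)) *ᵥ (gradh *ᵥ x))) = 0 := by
      have := h1
      rw [hR, Matrix.sub_mulVec, Matrix.one_mulVec, sub_eq_zero] at this
      rw [Matrix.mulVec_neg, Matrix.mulVec_mulVec, ← Matrix.mul_assoc]
      rw [add_neg_eq_zero]
      nth_rewrite 1 [this]
      rw [Matrix.mul_assoc, Matrix.mulVec_mulVec]
    exact (hli x _ h2).1
  have hPdet : IsUnit P.det := by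
    rw [isUnit_iff_ne_zero]
    intro hdet
    obtain ⟨v, hv0, hv⟩ := (Matrix.exists_mulVec_eq_zero_iff).2 hdet
    exact hv0 (hPker v hv)
  have hPP : P * P⁻¹ = 1 := Matrix.mul_nonsing_inv _ hPdet
  have hPinvsymm : (P⁻¹)ᵀ = P⁻¹ := by rw [Matrix.transpose_nonsing_inv, hPsymm]
  intro θ
  set F : Fin n → ℝ := Mᵀ *ᵥ θ + c with hFdef
  clear_value F
  set s : Fin m → ℝ := gradhᵀ *ᵥ (R *ᵥ F) with hsdef
  clear_value s
  set b : Fin m → ℝ := P⁻¹ *ᵥ s with hbdef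
  clear_value b
  have hPb : P *ᵥ b = s := by rw [hbdef, Matrix.mulVec_mulVec, hPP, Matrix.one_mulVec]
  -- expansion of the quadratic form
  have I1 : ∀ lam : Fin m → ℝ,
      (lam + b) ⬝ᵥ P *ᵥ (lam + b) = lam ⬝ᵥ (P *ᵥ lam) + 2 * (lam ⬝ᵥ s) + b ⬝ᵥ s := by
    intro lam
    rw [Matrix.mulVec_add, dotProduct_add, add_dotProduct,
      add_dotProduct, hPb]
    have e1 : b ⬝ᵥ (P *ᵥ lam) = lam ⬝ᵥ s := by
      rw [dp_mv, hPsymm, hPb, dotProduct_comm]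
    have e2 : b ⬝ᵥ s = b ⬝ᵥ s := rfl
    rw [e1]
    ring
  have I2 : F ⬝ᵥ Q *ᵥ F = F ⬝ᵥ (R *ᵥ F) - b ⬝ᵥ s := by
    rw [hQ, Matrix.sub_mulVec, dotProduct_sub]
    congr 1
    rw [← Matrix.mulVec_mulVec, ← Matrix.mulVec_mulVec, ← Matrix.mulVec_mulVec,
      ← Matrix.mulVec_mulVec, dp_mv, hRsymm, dp_mv, ← hsdef, ← hbdef,
      dotProduct_comm]
  -- cross terms with gradg vanish after projection
  have I4 : ∀ (y : Fin n → ℝ) (w : Fin p → ℝ), (R *ᵥ y) ⬝ᵥ (gradg *ᵥ w) = 0 := by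
    intro y w
    rw [dp_mv, Matrix.mulVec_mulVec, hgR, Matrix.zero_mulVec, zero_dotProduct]
  -- decomposition of F + gradh lam + gradg ν
  have I3 : ∀ (lam : Fin m → ℝ) (ν : Fin p → ℝ),
      F + gradh *ᵥ lam + gradg *ᵥ ν
        = R *ᵥ (F + gradh *ᵥ lam)
          + gradg *ᵥ (ν + (G⁻¹ * gradgᵀ) *ᵥ (F + gradh *ᵥ lam)) := by
    intro lam ν
    have hK : gradg *ᵥ ((G⁻¹ * gradgᵀ) *ᵥ (F + gradh *ᵥ lam))
        = (gradg * G⁻¹ * gradgᵀ) *ᵥ (F + gradh *ᵥ lam) := by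
      rw [Matrix.mulVec_mulVec, Matrix.mul_assoc]
    rw [Matrix.mulVec_add gradg, hK, hR, Matrix.sub_mulVec, Matrix.one_mulVec]
    abel
  -- key pointwise identity
  have key : ∀ (lam : Fin m → ℝ) (ν : Fin p → ℝ),
      euclNorm (F + gradh *ᵥ lam + gradg *ᵥ ν) ^ 2 + euclNorm (H *ᵥ lam) ^ 2
        = (lam + b) ⬝ᵥ P *ᵥ (lam + b) + F ⬝ᵥ Q *ᵥ F
          + (gradg *ᵥ (ν + (G⁻¹ * gradgᵀ) *ᵥ (F + gradh *ᵥ lam)))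
              ⬝ᵥ (gradg *ᵥ (ν + (G⁻¹ * gradgᵀ) *ᵥ (F + gradh *ᵥ lam))) := by
    intro lam ν
    rw [euclNorm_sq, euclNorm_sq, I3 lam ν]
    set v : Fin n → ℝ := F + gradh *ᵥ lam with hvdef
    set w : Fin p → ℝ := ν + (G⁻¹ * gradgᵀ) *ᵥ v with hwdef
    clear_value w
    clear_value v
    have expand : (R *ᵥ v + gradg *ᵥ w) ⬝ᵥ (R *ᵥ v + gradg *ᵥ w)
        = v ⬝ᵥ (R *ᵥ v) + (gradg *ᵥ w) ⬝ᵥ (gradg *ᵥ w) := by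
      rw [add_dotProduct, dotProduct_add, dotProduct_add,
        I4 v w, dotProduct_comm (gradg *ᵥ w) (R *ᵥ v), I4 v w, hRidem]
      ring
    rw [expand]
    -- now expand v ⬝ᵥ (R *ᵥ v)
    have vRv : v ⬝ᵥ (R *ᵥ v)
        = F ⬝ᵥ (R *ᵥ F) + 2 * (lam ⬝ᵥ s) + (gradh *ᵥ lam) ⬝ᵥ (R *ᵥ (gradh *ᵥ lam)) := by
      rw [hvdef, Matrix.mulVec_add, dotProduct_add, add_dotProduct,
        add_dotProduct]
      have e1 : F ⬝ᵥ (R *ᵥ (gradh *ᵥ lam)) = lam ⬝ᵥ s := by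
        rw [dp_mv, hRsymm, dp_mv, ← hsdef, dotProduct_comm]
      have e2 : (gradh *ᵥ lam) ⬝ᵥ (R *ᵥ F) = lam ⬝ᵥ s := by
        rw [dotProduct_comm, dp_mv, ← hsdef, dotProduct_comm]
      rw [e1, e2]
      ring
    rw [vRv, I1 lam, I2]
    have hHlam : (H *ᵥ lam) ⬝ᵥ (H *ᵥ lam)
        = lam ⬝ᵥ (P *ᵥ lam) - (gradh *ᵥ lam) ⬝ᵥ (R *ᵥ (gradh *ᵥ lam)) := by
      rw [hPquad lam]
      ring
    rw [hHlam]
    ring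
  -- Apply the sInf shift lemma
  have main := sInf_shift
    {t : ℝ | ∃ (lam : Fin m → ℝ) (ν : Fin p → ℝ), (∀ i, 0 ≤ lam i) ∧
        t = euclNorm (F + gradh *ᵥ lam + gradg *ᵥ ν) ^ 2
            + euclNorm (H *ᵥ lam) ^ 2 + euclNorm g ^ 2}
    {t : ℝ | ∃ lam : Fin m → ℝ, (∀ i, 0 ≤ lam i) ∧
        t = (lam + b) ⬝ᵥ P *ᵥ (lam + b)}
    (F ⬝ᵥ Q *ᵥ F + euclNorm g ^ 2)
    ⟨_, 0, 0, fun i => le_rfl, rfl⟩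
    ⟨_, 0, fun i => le_rfl, rfl⟩
    ⟨0, by
      rintro t ⟨lam, ν, hlam, rfl⟩
      positivity⟩
    ⟨0, by
      rintro t ⟨lam, hlam, rfl⟩
      exact hPpsd _⟩
    (by
      rintro t ⟨lam, ν, hlam, rfl⟩
      refine ⟨(lam + b) ⬝ᵥ P *ᵥ (lam + b), ⟨lam, hlam, rfl⟩, ?_⟩
      have := key lam ν
      have hnn := dp_self_nonneg
        (gradg *ᵥ (ν + (G⁻¹ * gradgᵀ) *ᵥ (F + gradh *ᵥ lam)))
      linarith)
    (by
      rintro u ⟨lam, hlam, rfl⟩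
      refine ⟨lam, -((G⁻¹ * gradgᵀ) *ᵥ (F + gradh *ᵥ lam)), hlam, ?_⟩
      have := key lam (-((G⁻¹ * gradgᵀ) *ᵥ (F + gradh *ᵥ lam)))
      rw [neg_add_cancel, Matrix.mulVec_zero, dotProduct_zero] at this
      linarith)
  rw [main]
  ring
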